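/- Up to Aff(ℤ²), the triangle with vertices (0,0), (1,2), (2,1) is the only lattice triangle with exactly two interior integral points and all three edges of lattice length 1. -/

import Mathlib

/-- Embedding of the integer lattice into the real plane. -/
def toR (p : ℤ × ℤ) : ℝ × ℝ := ((p.1 : ℝ), (p.2 : ℝ))

/-- `T` is a lattice-preserving affine automorphism of ℤ² (an element of Aff(ℤ²)). -/
def IsUnimodularAffine (T : ℤ × ℤ → ℤ × ℤ) : Prop :=
  ∃ a b c d e f : ℤ, (a * d - b * c = 1 ∨ a * d - b * c = -1) ∧
    ∀ p : ℤ × ℤ, T p = (a * p.1 + b * p.2 + e, c * p.1 + d * p.2 + f)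

/-- Two finite lattice point configurations are equivalent under Aff(ℤ²). -/
def LatticeEquiv (Q Q' : Finset (ℤ × ℤ)) : Prop :=
  ∃ T : ℤ × ℤ → ℤ × ℤ, IsUnimodularAffine T ∧ Q.image T = Q'

/-- The convex hull of a lattice point configuration, in ℝ². -/
noncomputable def hullR (Q : Finset (ℤ × ℤ)) : Set (ℝ × ℝ) :=
  convexHull ℝ (toR '' ↑Q)

/-- `Q` is the vertex set of a lattice polygon with `n` vertices, all of whose boundary
lattice points are vertices (i.e. all edges have lattice length 1) and with exactly `i`
interior lattice points. -/
def IsLatticePolygonPrimitiveEdges (Q : Finset (ℤ × ℤ)) (n i : ℕ) : Prop :=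
  Q.card = n ∧
  (∀ p ∈ Q, toR p ∈ Set.extremePoints ℝ (hullR Q)) ∧
  (∀ q : ℤ × ℤ, toR q ∈ frontier (hullR Q) → q ∈ Q) ∧
  Set.ncard {q : ℤ × ℤ | toR q ∈ interior (hullR Q)} = i

/-- The triangle conv{(0,0),(2,1),(1,3)} with interior points (1,1) and (1,2). -/
def T0 : Finset (ℤ × ℤ) := {(0, 0), (2, 1), (1, 3)}



/-- edge functional -/
def ef (P Q p : ℝ × ℝ) : ℝ := (Q.1-P.1)*(p.2-P.2)-(Q.2-P.2)*(p.1-P.1)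

lemma ef_affine (P Q : ℝ×ℝ) (t s : ℝ) (x y : ℝ×ℝ) (h : t + s = 1) :
    ef P Q (t•x + s•y) = t * ef P Q x + s * ef P Q y := by
  have hs : s = 1 - t := by linarith
  subst hs
  simp only [ef, Prod.smul_fst, Prod.smul_snd, Prod.fst_add, Prod.snd_add, smul_eq_mul]
  ring

lemma convex_ef (P Q : ℝ×ℝ) : Convex ℝ {p | 0 ≤ ef P Q p} := by
  intro x hx y hy a b ha hb hab
  simp only [Set.mem_setOf_eq] at *
  rw [ef_affine P Q a b x y hab]
  positivity

lemma isOpen_ef_pos (P Q : ℝ×ℝ) : IsOpen {p : ℝ×ℝ | 0 < ef P Q p} := by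
  have : Continuous fun p : ℝ×ℝ => ef P Q p := by unfold ef; fun_prop
  exact isOpen_lt continuous_const this

lemma interior_ef (P Q : ℝ×ℝ) (h : P ≠ Q) :
    interior {p | 0 ≤ ef P Q p} = {p | 0 < ef P Q p} := by
  apply subset_antisymm
  · intro p hp
    have hp0 : 0 ≤ ef P Q p := by have h0 : p ∈ {p | 0 ≤ ef P Q p} := interior_subset hp; exact h0
    rcases lt_or_eq_of_le hp0 with h' | h'
    · exact h'
    exfalso
    -- p on the line; find nearby point with negative value
    set a : ℝ := -(Q.2-P.2)
    set b : ℝ := (Q.1-P.1)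
    have hab : a ≠ 0 ∨ b ≠ 0 := by
      by_contra hc
      push_neg at hc
      apply h
      have h1 : Q.1 = P.1 := by have := hc.2; simp [b] at this; linarith
      have h2 : Q.2 = P.2 := by have := hc.1; simp [a] at this; linarith
      exact Prod.ext h1.symm h2.symm |>.symm ▸ rfl
    have habs : 0 < a^2 + b^2 := by
      rcases hab with ha | hb
      · positivity
      · positivity
    obtain ⟨ε, hε, hball⟩ := Metric.mem_nhds_iff.mp (mem_interior_iff_mem_nhds.mp hp)
    set t : ℝ := ε / (2 * (|a| + |b| + 1))
    have ht : 0 < t := by positivity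
    set q : ℝ×ℝ := (p.1 - t*a, p.2 - t*b)
    have hq : q ∈ Metric.ball p ε := by
      simp only [Metric.mem_ball, Prod.dist_eq, dist_comm]
      have h1 : dist p.1 q.1 = |t*a| := by
        rw [Real.dist_eq]; congr 1; show p.1 - (p.1 - t*a) = t*a; ring
      have h2 : dist p.2 q.2 = |t*b| := by
        rw [Real.dist_eq]; congr 1; show p.2 - (p.2 - t*b) = t*b; ring
      have hta : |t*a| < ε := by
        rw [abs_mul, abs_of_pos ht]
        calc t * |a| ≤ t * (|a| + |b| + 1) := by
              apply mul_le_mul_of_nonneg_left _ ht.le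
              have := abs_nonneg b; linarith
          _ = ε / 2 := by simp only [t]; rw [div_mul_eq_mul_div, mul_comm (2:ℝ), ← div_div, mul_div_cancel_right₀ _ (by positivity : (|a|+|b|+1:ℝ) ≠ 0)]
          _ < ε := by linarith
      have htb : |t*b| < ε := by
        rw [abs_mul, abs_of_pos ht]
        calc t * |b| ≤ t * (|a| + |b| + 1) := by
              apply mul_le_mul_of_nonneg_left _ ht.le
              have := abs_nonneg a; linarith
          _ = ε / 2 := by simp only [t]; rw [div_mul_eq_mul_div, mul_comm (2:ℝ), ← div_div, mul_div_cancel_right₀ _ (by positivity : (|a|+|b|+1:ℝ) ≠ 0)]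
          _ < ε := by linarith
      rw [max_lt_iff]
      exact ⟨h1 ▸ hta, h2 ▸ htb⟩
    have hqmem : 0 ≤ ef P Q q := hball hq
    have : ef P Q q = ef P Q p - t * (a^2 + b^2) := by
      simp only [ef, q, a, b]; ring
    rw [this, ← h'] at hqmem
    nlinarith
  · intro p hp
    have hsub : {p : ℝ×ℝ | 0 < ef P Q p} ⊆ {p : ℝ×ℝ | 0 ≤ ef P Q p} := by
      intro q hq; simp only [Set.mem_setOf_eq] at *; linarith
    exact interior_maximal hsub (isOpen_ef_pos P Q) hp

lemma ef_def (P Q p : ℝ×ℝ) : ef P Q p = (Q.1-P.1)*(p.2-P.2)-(Q.2-P.2)*(p.1-P.1) := rfl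

section Triangle
variable {A B C : ℝ×ℝ}

-- basic identities
lemma ef_sum (hD : True) (p : ℝ×ℝ) : ef A B p + ef B C p + ef C A p = ef A B C := by
  simp only [ef_def]; ring

lemma ef_self (P Q : ℝ×ℝ) : ef P Q P = 0 := by simp [ef_def]
lemma ef_self' (P Q : ℝ×ℝ) : ef P Q Q = 0 := by simp [ef_def]; ring
lemma ef_cyc (P Q R : ℝ×ℝ) : ef Q R P = ef P Q R := by simp only [ef_def]; ring

lemma cramer1 (p : ℝ×ℝ) :
    ef A B C * p.1 = ef B C p * A.1 + ef C A p * B.1 + ef A B p * C.1 := by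
  simp only [ef_def]; ring

lemma cramer2 (p : ℝ×ℝ) :
    ef A B C * p.2 = ef B C p * A.2 + ef C A p * B.2 + ef A B p * C.2 := by
  simp only [ef_def]; ring

lemma ne_of_det (hD : 0 < ef A B C) : A ≠ B ∧ B ≠ C ∧ C ≠ A := by
  refine ⟨?_, ?_, ?_⟩ <;> rintro rfl <;> simp [ef_def] at hD <;> nlinarith [hD]

theorem hull_tri (hD : 0 < ef A B C) :
    convexHull ℝ {A, B, C} = {p | 0 ≤ ef A B p ∧ 0 ≤ ef B C p ∧ 0 ≤ ef C A p} := by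
  have hvA : (0:ℝ) ≤ ef A B A ∧ (0:ℝ) ≤ ef B C A ∧ (0:ℝ) ≤ ef C A A := by
    refine ⟨le_of_eq (ef_self A B).symm, ?_, le_of_eq (ef_self' C A).symm⟩
    rw [ef_cyc]; linarith
  have hvB : (0:ℝ) ≤ ef A B B ∧ (0:ℝ) ≤ ef B C B ∧ (0:ℝ) ≤ ef C A B := by
    refine ⟨le_of_eq (ef_self' A B).symm, le_of_eq (ef_self B C).symm, ?_⟩
    rw [ef_cyc, ef_cyc]; linarith
  have hvC : (0:ℝ) ≤ ef A B C ∧ (0:ℝ) ≤ ef B C C ∧ (0:ℝ) ≤ ef C A C :=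
    ⟨le_of_lt hD, le_of_eq (ef_self' B C).symm, le_of_eq (ef_self C A).symm⟩
  apply subset_antisymm
  · apply convexHull_min
    · intro x hx
      simp only [Set.mem_insert_iff, Set.mem_singleton_iff] at hx
      rcases hx with rfl | rfl | rfl
      · exact hvA
      · exact hvB
      · exact hvC
    · have : {p : ℝ×ℝ | 0 ≤ ef A B p ∧ 0 ≤ ef B C p ∧ 0 ≤ ef C A p}
          = {p | 0 ≤ ef A B p} ∩ ({p | 0 ≤ ef B C p} ∩ {p | 0 ≤ ef C A p}) := by
        ext p; simp [Set.mem_inter_iff]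
      rw [this]
      exact (convex_ef A B).inter ((convex_ef B C).inter (convex_ef C A))
  · rintro p ⟨h1, h2, h3⟩
    have hD0 : ef A B C ≠ 0 := ne_of_gt hD
    have hw : ef B C p / ef A B C + ef C A p / ef A B C + ef A B p / ef A B C = 1 := by
      field_simp
      linarith [ef_sum (A := A) (B := B) (C := C) trivial p]
    have hp : p = (ef B C p / ef A B C) • A + (ef C A p / ef A B C) • B
        + (ef A B p / ef A B C) • C := by
      have c1 := cramer1 (A := A) (B := B) (C := C) p
      have c2 := cramer2 (A := A) (B := B) (C := C) p
      apply Prod.ext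
      · simp only [Prod.fst_add, Prod.smul_fst, smul_eq_mul]
        field_simp
        linarith
      · simp only [Prod.snd_add, Prod.smul_snd, smul_eq_mul]
        field_simp
        linarith
    rw [hp]
    have hmem : ∀ i : Fin 3, (![A, B, C] i) ∈ ({A, B, C} : Set (ℝ×ℝ)) := by
      intro i; fin_cases i <;> simp
    have := Finset.centerMass_mem_convexHull (Finset.univ : Finset (Fin 3))
      (w := ![ef B C p / ef A B C, ef C A p / ef A B C, ef A B p / ef A B C])
      (z := ![A, B, C]) ?_ ?_ (fun i _ => hmem i)
    · convert this using 1
      rw [Finset.centerMass]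
      rw [Fin.sum_univ_three, Fin.sum_univ_three]
      simp only [Matrix.cons_val_zero, Matrix.cons_val_one, Matrix.head_cons,
        Matrix.cons_val_two, Matrix.tail_cons]
      rw [hw, inv_one, one_smul]
    · intro i _
      fin_cases i <;> simp <;> positivity
    · rw [Fin.sum_univ_three]
      simp only [Matrix.cons_val_zero, Matrix.cons_val_one, Matrix.head_cons,
        Matrix.cons_val_two, Matrix.tail_cons]
      rw [hw]; norm_num

theorem interior_tri (hD : 0 < ef A B C) :
    interior (convexHull ℝ {A, B, C})
      = {p | 0 < ef A B p ∧ 0 < ef B C p ∧ 0 < ef C A p} := by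
  obtain ⟨hAB, hBC, hCA⟩ := ne_of_det hD
  rw [hull_tri hD]
  have : {p : ℝ×ℝ | 0 ≤ ef A B p ∧ 0 ≤ ef B C p ∧ 0 ≤ ef C A p}
      = {p | 0 ≤ ef A B p} ∩ ({p | 0 ≤ ef B C p} ∩ {p | 0 ≤ ef C A p}) := by
    ext p; simp [Set.mem_inter_iff]
  rw [this, interior_inter, interior_inter,
    interior_ef A B hAB, interior_ef B C hBC, interior_ef C A hCA]
  ext p; simp [Set.mem_inter_iff]

lemma isClosed_hull_tri : IsClosed (convexHull ℝ ({A, B, C} : Set (ℝ×ℝ))) := by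
  have : Set.Finite ({A, B, C} : Set (ℝ×ℝ)) := by
    apply Set.Finite.insert; apply Set.Finite.insert; exact Set.finite_singleton _
  exact (this.isCompact_convexHull (𝕜 := ℝ)).isClosed

theorem frontier_tri (hD : 0 < ef A B C) :
    frontier (convexHull ℝ {A, B, C})
      = {p | (0 ≤ ef A B p ∧ 0 ≤ ef B C p ∧ 0 ≤ ef C A p)
          ∧ (ef A B p = 0 ∨ ef B C p = 0 ∨ ef C A p = 0)} := by
  rw [isClosed_hull_tri.frontier_eq, interior_tri hD, hull_tri hD]
  ext p
  simp only [Set.mem_diff, Set.mem_setOf_eq]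
  constructor
  · rintro ⟨⟨h1, h2, h3⟩, hn⟩
    refine ⟨⟨h1, h2, h3⟩, ?_⟩
    by_contra hc
    push_neg at hc
    exact hn ⟨lt_of_le_of_ne h1 (Ne.symm hc.1), lt_of_le_of_ne h2 (Ne.symm hc.2.1),
      lt_of_le_of_ne h3 (Ne.symm hc.2.2)⟩
  · rintro ⟨⟨h1, h2, h3⟩, hz⟩
    refine ⟨⟨h1, h2, h3⟩, ?_⟩
    rintro ⟨p1, p2, p3⟩
    rcases hz with hz | hz | hz <;> linarith

-- characterization of vertices by vanishing of two functionals
lemma char_A (hD : 0 < ef A B C) (p : ℝ×ℝ) (h1 : ef A B p = 0) (h3 : ef C A p = 0) :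
    p = A := by
  have hs := ef_sum (A := A) (B := B) (C := C) trivial p
  have h2 : ef B C p = ef A B C := by linarith
  have c1 := cramer1 (A := A) (B := B) (C := C) p
  have c2 := cramer2 (A := A) (B := B) (C := C) p
  rw [h1, h2, h3] at c1 c2
  have hD0 : ef A B C ≠ 0 := ne_of_gt hD
  apply Prod.ext
  · apply mul_left_cancel₀ hD0; linarith
  · apply mul_left_cancel₀ hD0; linarith

lemma char_B (hD : 0 < ef A B C) (p : ℝ×ℝ) (h1 : ef A B p = 0) (h2 : ef B C p = 0) :
    p = B := by
  have hs := ef_sum (A := A) (B := B) (C := C) trivial p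
  have h3 : ef C A p = ef A B C := by linarith
  have c1 := cramer1 (A := A) (B := B) (C := C) p
  have c2 := cramer2 (A := A) (B := B) (C := C) p
  rw [h1, h2, h3] at c1 c2
  have hD0 : ef A B C ≠ 0 := ne_of_gt hD
  apply Prod.ext
  · apply mul_left_cancel₀ hD0; linarith
  · apply mul_left_cancel₀ hD0; linarith

lemma char_C (hD : 0 < ef A B C) (p : ℝ×ℝ) (h2 : ef B C p = 0) (h3 : ef C A p = 0) :
    p = C := by
  have hs := ef_sum (A := A) (B := B) (C := C) trivial p
  have h1 : ef A B p = ef A B C := by linarith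
  have c1 := cramer1 (A := A) (B := B) (C := C) p
  have c2 := cramer2 (A := A) (B := B) (C := C) p
  rw [h1, h2, h3] at c1 c2
  have hD0 : ef A B C ≠ 0 := ne_of_gt hD
  apply Prod.ext
  · apply mul_left_cancel₀ hD0; linarith
  · apply mul_left_cancel₀ hD0; linarith

-- extreme point helper
lemma extreme_of_two (hD : 0 < ef A B C) (V : ℝ×ℝ)
    (u v : ℝ×ℝ → ℝ)
    (hu : ∀ p ∈ convexHull ℝ ({A,B,C} : Set (ℝ×ℝ)), 0 ≤ u p)
    (hv : ∀ p ∈ convexHull ℝ ({A,B,C} : Set (ℝ×ℝ)), 0 ≤ v p)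
    (haffu : ∀ (t s : ℝ) x y, t + s = 1 → u (t•x + s•y) = t * u x + s * u y)
    (haffv : ∀ (t s : ℝ) x y, t + s = 1 → v (t•x + s•y) = t * v x + s * v y)
    (hV : V ∈ convexHull ℝ ({A,B,C} : Set (ℝ×ℝ)))
    (huV : u V = 0) (hvV : v V = 0)
    (hchar : ∀ p, u p = 0 → v p = 0 → p = V) :
    V ∈ Set.extremePoints ℝ (convexHull ℝ ({A,B,C} : Set (ℝ×ℝ))) := by
  refine ⟨hV, ?_⟩
  intro x hx y hy hseg
  obtain ⟨a, b, ha, hb, hab, hxy⟩ := hseg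
  have hu' : a * u x + b * u y = 0 := by
    rw [← haffu a b x y hab, hxy, huV]
  have hv' : a * v x + b * v y = 0 := by
    rw [← haffv a b x y hab, hxy, hvV]
  have hux := hu x hx; have huy := hu y hy
  have hvx := hv x hx; have hvy := hv y hy
  have h1 : u x = 0 := by nlinarith
  have h2 : u y = 0 := by nlinarith
  have h3 : v x = 0 := by nlinarith
  have h4 : v y = 0 := by nlinarith
  exact hchar x h1 h3

theorem vertices_extreme (hD : 0 < ef A B C) :
    A ∈ Set.extremePoints ℝ (convexHull ℝ ({A,B,C} : Set (ℝ×ℝ)))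
    ∧ B ∈ Set.extremePoints ℝ (convexHull ℝ ({A,B,C} : Set (ℝ×ℝ)))
    ∧ C ∈ Set.extremePoints ℝ (convexHull ℝ ({A,B,C} : Set (ℝ×ℝ))) := by
  have hmem : ∀ p ∈ convexHull ℝ ({A,B,C} : Set (ℝ×ℝ)),
      0 ≤ ef A B p ∧ 0 ≤ ef B C p ∧ 0 ≤ ef C A p := by
    intro p hp; rw [hull_tri hD] at hp; exact hp
  have hA : A ∈ convexHull ℝ ({A,B,C} : Set (ℝ×ℝ)) := subset_convexHull ℝ _ (by simp)
  have hB : B ∈ convexHull ℝ ({A,B,C} : Set (ℝ×ℝ)) := subset_convexHull ℝ _ (by simp)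
  have hC : C ∈ convexHull ℝ ({A,B,C} : Set (ℝ×ℝ)) := subset_convexHull ℝ _ (by simp)
  refine ⟨?_, ?_, ?_⟩
  · exact extreme_of_two hD A (ef A B) (ef C A)
      (fun p hp => (hmem p hp).1) (fun p hp => (hmem p hp).2.2)
      (fun t s x y h => ef_affine A B t s x y h)
      (fun t s x y h => ef_affine C A t s x y h)
      hA (ef_self A B) (ef_self' C A)
      (fun p h1 h3 => char_A hD p h1 h3)
  · exact extreme_of_two hD B (ef A B) (ef B C)
      (fun p hp => (hmem p hp).1) (fun p hp => (hmem p hp).2.1)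
      (fun t s x y h => ef_affine A B t s x y h)
      (fun t s x y h => ef_affine B C t s x y h)
      hB (ef_self' A B) (ef_self B C)
      (fun p h1 h2 => char_B hD p h1 h2)
  · exact extreme_of_two hD C (ef B C) (ef C A)
      (fun p hp => (hmem p hp).2.1) (fun p hp => (hmem p hp).2.2)
      (fun t s x y h => ef_affine B C t s x y h)
      (fun t s x y h => ef_affine C A t s x y h)
      hC (ef_self' B C) (ef_self C A)
      (fun p h2 h3 => char_C hD p h2 h3)

end Triangle

-- ===== unimodular basics =====

lemma unimodular_inverse {T : ℤ×ℤ → ℤ×ℤ} (hT : IsUnimodularAffine T) :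
    ∃ S : ℤ×ℤ → ℤ×ℤ, IsUnimodularAffine S ∧ (∀ p, S (T p) = p) ∧ (∀ p, T (S p) = p) := by
  obtain ⟨a, b, c, d, e, f, hdet, hTf⟩ := hT
  rcases hdet with h | h
  · refine ⟨fun p => (d*p.1 + (-b)*p.2 + (b*f - d*e), (-c)*p.1 + a*p.2 + (c*e - a*f)),
      ⟨d, -b, -c, a, b*f - d*e, c*e - a*f, ?_, fun p => rfl⟩, ?_, ?_⟩
    · left; linear_combination h
    · intro p; obtain ⟨x, y⟩ := p
      rw [hTf (x, y)]
      simp only [Prod.mk.injEq]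
      constructor
      · linear_combination x * h
      · linear_combination y * h
    · intro p; obtain ⟨x, y⟩ := p
      rw [hTf _]
      simp only [Prod.mk.injEq]
      constructor
      · linear_combination (x - e) * h
      · linear_combination (y - f) * h
  · refine ⟨fun p => ((-d)*p.1 + b*p.2 + (d*e - b*f), c*p.1 + (-a)*p.2 + (a*f - c*e)),
      ⟨-d, b, c, -a, d*e - b*f, a*f - c*e, ?_, fun p => rfl⟩, ?_, ?_⟩
    · right; linear_combination h
    · intro p; obtain ⟨x, y⟩ := p
      rw [hTf (x, y)]
      simp only [Prod.mk.injEq]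
      constructor
      · linear_combination (-x) * h
      · linear_combination (-y) * h
    · intro p; obtain ⟨x, y⟩ := p
      rw [hTf _]
      simp only [Prod.mk.injEq]
      constructor
      · linear_combination (e - x) * h
      · linear_combination (f - y) * h

lemma unimodular_injective {T : ℤ×ℤ → ℤ×ℤ} (hT : IsUnimodularAffine T) :
    Function.Injective T := by
  obtain ⟨S, _, hl, _⟩ := unimodular_inverse hT
  intro p q h
  have := congrArg S h
  rwa [hl, hl] at this

lemma unimodular_comp {T T' : ℤ×ℤ → ℤ×ℤ} (hT : IsUnimodularAffine T)
    (hT' : IsUnimodularAffine T') : IsUnimodularAffine (T' ∘ T) := by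
  obtain ⟨a, b, c, d, e, f, hdet, hTf⟩ := hT
  obtain ⟨a', b', c', d', e', f', hdet', hTf'⟩ := hT'
  refine ⟨a'*a + b'*c, a'*b + b'*d, c'*a + d'*c, c'*b + d'*d,
    a'*e + b'*f + e', c'*e + d'*f + f', ?_, ?_⟩
  · have key : (a'*a + b'*c) * (c'*b + d'*d) - (a'*b + b'*d) * (c'*a + d'*c)
        = (a'*d' - b'*c') * (a*d - b*c) := by ring
    rcases hdet with h | h <;> rcases hdet' with h' | h' <;> rw [key, h, h'] <;> simp
  · intro p
    simp only [Function.comp_apply, hTf p, hTf' _]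
    simp only [Prod.mk.injEq]
    constructor <;> ring

lemma latticeEquiv_symm {Q Q' : Finset (ℤ×ℤ)} (h : LatticeEquiv Q Q') :
    LatticeEquiv Q' Q := by
  obtain ⟨T, hT, himg⟩ := h
  obtain ⟨S, hS, hl, hr⟩ := unimodular_inverse hT
  refine ⟨S, hS, ?_⟩
  rw [← himg, Finset.image_image]
  ext q
  simp only [Finset.mem_image, Function.comp_apply]
  constructor
  · rintro ⟨r, hr', rfl⟩; rwa [hl]
  · intro hq; exact ⟨q, hq, hl q⟩

lemma latticeEquiv_trans {Q Q' Q'' : Finset (ℤ×ℤ)} (h : LatticeEquiv Q Q')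
    (h' : LatticeEquiv Q' Q'') : LatticeEquiv Q Q'' := by
  obtain ⟨T, hT, rfl⟩ := h
  obtain ⟨T', hT', rfl⟩ := h'
  exact ⟨T' ∘ T, unimodular_comp hT hT', (Finset.image_image).symm⟩

-- ===== real affine machinery =====

/-- generic: image of convex hull under an "affine-like" map -/
lemma image_convexHull_affine (g : ℝ×ℝ → ℝ×ℝ)
    (haff : ∀ (t s : ℝ) (x y : ℝ×ℝ), 0 ≤ t → 0 ≤ s → t + s = 1 →
      g (t•x + s•y) = t•(g x) + s•(g y)) (s : Set (ℝ×ℝ)) :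
    g '' (convexHull ℝ s) = convexHull ℝ (g '' s) := by
  apply subset_antisymm
  · have hpre : convexHull ℝ s ⊆ g ⁻¹' (convexHull ℝ (g '' s)) := by
      apply convexHull_min
      · intro x hx
        exact subset_convexHull ℝ _ ⟨x, hx, rfl⟩
      · intro x hx y hy t u ht hu htu
        simp only [Set.mem_preimage] at *
        rw [haff t u x y ht hu htu]
        exact (convex_convexHull ℝ _) hx hy ht hu htu
    intro z hz
    obtain ⟨x, hx, rfl⟩ := hz
    exact hpre hx
  · apply convexHull_min
    · exact Set.image_mono (subset_convexHull ℝ s)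
    · intro u hu v hv t w ht hw htw
      obtain ⟨x, hx, rfl⟩ := hu
      obtain ⟨y, hy, rfl⟩ := hv
      rw [← haff t w x y ht hw htw]
      exact ⟨t•x + w•y, (convex_convexHull ℝ s) hx hy ht hw htw, rfl⟩

section Invariance

variable {a b c d e f : ℤ}

/-- the real extension of the affine map -/
def TR (a b c d e f : ℤ) (p : ℝ×ℝ) : ℝ×ℝ :=
  ((a:ℝ)*p.1 + (b:ℝ)*p.2 + (e:ℝ), (c:ℝ)*p.1 + (d:ℝ)*p.2 + (f:ℝ))

lemma TR_affine (t s : ℝ) (x y : ℝ×ℝ) (h : t + s = 1) :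
    TR a b c d e f (t•x + s•y) = t•(TR a b c d e f x) + s•(TR a b c d e f y) := by
  have hs : s = 1 - t := by linarith
  subst hs
  simp only [TR, Prod.smul_fst, Prod.smul_snd, Prod.fst_add, Prod.snd_add, smul_eq_mul,
    Prod.mk_add_mk, Prod.smul_mk, Prod.mk.injEq]
  constructor <;> ring

lemma TR_toR {T : ℤ×ℤ → ℤ×ℤ}
    (hTf : ∀ p : ℤ×ℤ, T p = (a * p.1 + b * p.2 + e, c * p.1 + d * p.2 + f)) (p : ℤ×ℤ) :
    toR (T p) = TR a b c d e f (toR p) := by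
  rw [hTf p]
  simp only [toR, TR]
  push_cast
  rfl

lemma TR_continuous : Continuous (TR a b c d e f) := by
  unfold TR; fun_prop

/-- TR as a homeomorphism, given unimodularity -/
noncomputable def TRhomeo (hdet : a * d - b * c = 1 ∨ a * d - b * c = -1) : (ℝ×ℝ) ≃ₜ (ℝ×ℝ) where
  toFun := TR a b c d e f
  invFun := fun p => ((((a*d-b*c:ℤ):ℝ))*((d:ℝ)*(p.1-(e:ℝ)) - (b:ℝ)*(p.2-(f:ℝ))),
                      (((a*d-b*c:ℤ):ℝ))*(-(c:ℝ)*(p.1-(e:ℝ)) + (a:ℝ)*(p.2-(f:ℝ))))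
  left_inv := by
    intro p
    obtain ⟨x, y⟩ := p
    have h2 : ((a:ℝ)*d - b*c) * ((a:ℝ)*d - b*c) = 1 := by
      rcases hdet with h | h <;>
      · have : ((a*d - b*c : ℤ) : ℝ) = ((a:ℝ)*d - b*c) := by push_cast; ring
        rw [← this, h]; norm_num
    simp only [TR, Prod.mk.injEq]
    push_cast
    constructor
    · linear_combination x * h2
    · linear_combination y * h2
  right_inv := by
    intro p
    obtain ⟨x, y⟩ := p
    have h2 : ((a:ℝ)*d - b*c) * ((a:ℝ)*d - b*c) = 1 := by
      rcases hdet with h | h <;>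
      · have : ((a*d - b*c : ℤ) : ℝ) = ((a:ℝ)*d - b*c) := by push_cast; ring
        rw [← this, h]; norm_num
    simp only [TR, Prod.mk.injEq]
    push_cast
    constructor
    · linear_combination (x - e) * h2
    · linear_combination (y - f) * h2
  continuous_toFun := TR_continuous
  continuous_invFun := by fun_prop

lemma hullR_image {Q : Finset (ℤ×ℤ)} {T : ℤ×ℤ → ℤ×ℤ}
    (hTf : ∀ p : ℤ×ℤ, T p = (a * p.1 + b * p.2 + e, c * p.1 + d * p.2 + f)) :
    hullR (Q.image T) = TR a b c d e f '' hullR Q := by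
  unfold hullR
  rw [Finset.coe_image, Set.image_image]
  have : (fun x => toR (T x)) '' (↑Q : Set (ℤ×ℤ)) = TR a b c d e f '' (toR '' ↑Q) := by
    rw [Set.image_image]
    apply Set.image_congr
    intro p _
    exact TR_toR hTf p
  rw [this]
  exact (image_convexHull_affine (TR a b c d e f)
    (fun t s x y _ _ h => TR_affine t s x y h) _).symm

theorem invariance {Q : Finset (ℤ×ℤ)} {T : ℤ×ℤ → ℤ×ℤ} {n i : ℕ}
    (hT : IsUnimodularAffine T) (hQ : IsLatticePolygonPrimitiveEdges Q n i) :
    IsLatticePolygonPrimitiveEdges (Q.image T) n i := by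
  obtain ⟨hcard, hext, hfront, hint⟩ := hQ
  obtain ⟨S, hS, hl, hr⟩ := unimodular_inverse hT
  have hinj : Function.Injective T := unimodular_injective hT
  obtain ⟨a, b, c, d, e, f, hdet, hTf⟩ := hT
  set g := TRhomeo (a := a) (b := b) (c := c) (d := d) (e := e) (f := f) hdet with hg
  have hgfun : (g : ℝ×ℝ → ℝ×ℝ) = TR a b c d e f := rfl
  have hhull : hullR (Q.image T) = g '' hullR Q := by
    rw [hgfun]; exact hullR_image hTf
  have hcomm : ∀ p : ℤ×ℤ, toR (T p) = g (toR p) := fun p => TR_toR hTf p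
  have hginj : Function.Injective (g : ℝ×ℝ → ℝ×ℝ) := g.injective
  refine ⟨?_, ?_, ?_, ?_⟩
  · rw [Finset.card_image_of_injective _ hinj]; exact hcard
  · -- extreme points
    intro p hp
    rw [Finset.mem_image] at hp
    obtain ⟨q, hq, rfl⟩ := hp
    obtain ⟨hqmem, hqext⟩ := hext q hq
    rw [hhull, hcomm]
    refine ⟨⟨toR q, hqmem, rfl⟩, ?_⟩
    rintro x₁ ⟨y₁, hy₁, rfl⟩ x₂ ⟨y₂, hy₂, rfl⟩ hseg
    obtain ⟨t, s, ht, hs, hts, hxy⟩ := hseg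
    have : g (t•y₁ + s•y₂) = g (toR q) := by
      rw [hgfun] at hxy ⊢
      rw [TR_affine t s y₁ y₂ hts]
      exact hxy
    have hqseg : toR q ∈ openSegment ℝ y₁ y₂ := by
      have := hginj this
      exact ⟨t, s, ht, hs, hts, this⟩
    have h1 := hqext hy₁ hy₂ hqseg
    rw [h1]
  · -- frontier
    intro q hq
    rw [hhull, ← Homeomorph.image_frontier] at hq
    obtain ⟨z, hz, hzq⟩ := hq
    have hz' : z = toR (S q) := by
      have : g (toR (S q)) = toR q := by rw [← hcomm (S q), hr q]
      apply hginj
      rw [hzq, this]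
    rw [hz'] at hz
    have := hfront (S q) hz
    rw [Finset.mem_image]
    exact ⟨S q, this, hr q⟩
  · -- interior count
    have hset : {q : ℤ×ℤ | toR q ∈ interior (hullR (Q.image T))}
        = T '' {q : ℤ×ℤ | toR q ∈ interior (hullR Q)} := by
      rw [hhull, ← Homeomorph.image_interior]
      ext q
      simp only [Set.mem_setOf_eq, Set.mem_image]
      constructor
      · rintro ⟨z, hz, hzq⟩
        refine ⟨S q, ?_, hr q⟩
        have : z = toR (S q) := by
          apply hginj
          rw [hzq, ← hcomm (S q), hr q]
        rwa [this] at hz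
      · rintro ⟨r, hrmem, rfl⟩
        exact ⟨toR r, hrmem, (hcomm r).symm⟩
    rw [hset, Set.ncard_image_of_injective _ hinj]
    exact hint

end Invariance
-- ===== section 5 : T0 satisfies the property =====

lemma ef_toR (P Q p : ℤ×ℤ) :
    ef (toR P) (toR Q) (toR p)
      = (((Q.1-P.1)*(p.2-P.2)-(Q.2-P.2)*(p.1-P.1) : ℤ) : ℝ) := by
  simp only [ef_def, toR]
  push_cast
  ring

lemma hullR_triple (A B C : ℤ×ℤ) :
    hullR ({A,B,C} : Finset (ℤ×ℤ)) = convexHull ℝ {toR A, toR B, toR C} := by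
  unfold hullR
  congr 1
  simp [Finset.coe_insert, Set.image_insert_eq]

theorem T0_property : IsLatticePolygonPrimitiveEdges T0 3 2 := by
  have hD : (0:ℝ) < ef (toR (0,0)) (toR (2,1)) (toR (1,3)) := by
    rw [ef_toR]; norm_num
  have hhull : hullR T0 = convexHull ℝ {toR (0,0), toR (2,1), toR (1,3)} :=
    hullR_triple (0,0) (2,1) (1,3)
  refine ⟨by decide, ?_, ?_, ?_⟩
  · intro p hp
    rw [hhull]
    fin_cases hp
    · exact (vertices_extreme hD).1
    · exact (vertices_extreme hD).2.1
    · exact (vertices_extreme hD).2.2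
  · intro q hq
    obtain ⟨x, y⟩ := q
    rw [hhull, frontier_tri hD] at hq
    simp only [Set.mem_setOf_eq, ef_toR] at hq
    obtain ⟨⟨h1, h2, h3⟩, hz⟩ := hq
    have h1' : (0:ℤ) ≤ (2-0)*(y-0)-(1-0)*(x-0) := by exact_mod_cast h1
    have h2' : (0:ℤ) ≤ (1-2)*(y-1)-(3-1)*(x-2) := by exact_mod_cast h2
    have h3' : (0:ℤ) ≤ (0-1)*(y-3)-(0-3)*(x-1) := by exact_mod_cast h3
    have hz' : (2-0)*(y-0)-(1-0)*(x-0) = (0:ℤ) ∨ (1-2)*(y-1)-(3-1)*(x-2) = (0:ℤ)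
        ∨ (0-1)*(y-3)-(0-3)*(x-1) = (0:ℤ) := by
      rcases hz with h | h | h
      · left; exact_mod_cast h
      · right; left; exact_mod_cast h
      · right; right; exact_mod_cast h
    simp only [T0, Finset.mem_insert, Finset.mem_singleton, Prod.mk.injEq]
    omega
  · have hset : {q : ℤ×ℤ | toR q ∈ interior (hullR T0)}
        = {((1:ℤ),(1:ℤ)), ((1:ℤ),(2:ℤ))} := by
      ext ⟨x, y⟩
      simp only [Set.mem_setOf_eq, hhull, interior_tri hD, ef_toR,
        Set.mem_insert_iff, Set.mem_singleton_iff, Prod.mk.injEq]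
      constructor
      · rintro ⟨h1, h2, h3⟩
        have h1' : (0:ℤ) < (2-0)*(y-0)-(1-0)*(x-0) := by exact_mod_cast h1
        have h2' : (0:ℤ) < (1-2)*(y-1)-(3-1)*(x-2) := by exact_mod_cast h2
        have h3' : (0:ℤ) < (0-1)*(y-3)-(0-3)*(x-1) := by exact_mod_cast h3
        omega
      · rintro (⟨rfl, rfl⟩ | ⟨rfl, rfl⟩) <;>
        refine ⟨?_, ?_, ?_⟩ <;> · rw [show (0:ℝ) = ((0:ℤ):ℝ) by norm_num]
                                  norm_num
    rw [hset]
    exact Set.ncard_pair (by decide)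

-- ===== section 6 : counting =====

lemma emod_pos_of_coprime {m h y : ℤ} (hh : 0 < h) (hm : IsCoprime m h)
    (hy : 0 < y) (hyh : y < h) : 0 < m*y % h := by
  have hr0 : 0 ≤ m*y % h := Int.emod_nonneg _ (ne_of_gt hh)
  rcases lt_or_eq_of_le hr0 with h' | h'
  · exact h'
  exfalso
  have hdvd : h ∣ m*y := Int.dvd_of_emod_eq_zero h'.symm
  have : h ∣ y := (hm.symm).dvd_of_dvd_mul_left hdvd
  have := Int.le_of_dvd hy this
  omega

lemma emod_complement {m h y : ℤ} (hh : 0 < h) (hm : IsCoprime m h)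
    (hy : 0 < y) (hyh : y < h) : m*(h-y) % h = h - m*y % h := by
  have hr0 : 0 < m*y % h := emod_pos_of_coprime hh hm hy hyh
  have hrh : m*y % h < h := Int.emod_lt_of_pos _ hh
  have key : m*(h-y) = (h - m*y % h) + h*(m - m*y/h - 1) := by
    linear_combination Int.mul_ediv_add_emod (m*y) h
  rw [key, Int.add_mul_emod_self_left]
  exact Int.emod_eq_of_lt (by omega) (by omega)

lemma emod_ne_self {m h y : ℤ} (hh : 0 < h) (hm1 : IsCoprime (m-1) h)
    (hy : 0 < y) (hyh : y < h) : m*y % h ≠ y := by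
  intro he
  have hmod : m*y % h = y % h := by
    rw [he, Int.emod_eq_of_lt (le_of_lt hy) hyh]
  have hdvd : h ∣ m*y - y := Int.ModEq.dvd (Int.ModEq.symm hmod)
  have : h ∣ (m-1)*y := by
    have : (m-1)*y = m*y - y := by ring
    rwa [this]
  have : h ∣ y := (hm1.symm).dvd_of_dvd_mul_left this
  have := Int.le_of_dvd hy this
  omega

lemma counting_lemma {m h : ℤ} (hh : 0 < h) (hm : IsCoprime m h) (hm1 : IsCoprime (m-1) h)
    (hcount : Set.ncard {q : ℤ×ℤ | 0 < q.2 ∧ m*q.2 < h*q.1 ∧ h*q.1 < (m-1)*q.2 + h} = 2) :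
    h = 5 := by
  classical
  set F : Finset (ℤ×ℤ) :=
    ((Finset.Ioo 0 h).filter (fun y => y < m*y % h)).image (fun y => (m*y/h + 1, y)) with hF
  have hSF : {q : ℤ×ℤ | 0 < q.2 ∧ m*q.2 < h*q.1 ∧ h*q.1 < (m-1)*q.2 + h} = ↑F := by
    ext ⟨x, y⟩
    simp only [Set.mem_setOf_eq, hF, Finset.coe_image, Set.mem_image, Finset.mem_coe,
      Finset.mem_filter, Finset.mem_Ioo, Prod.mk.injEq]
    constructor
    · rintro ⟨hy, hlo, hhi⟩
      have hdm := Int.mul_ediv_add_emod (m*y) h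
      have hr0 : 0 ≤ m*y % h := Int.emod_nonneg _ (ne_of_gt hh)
      have hrh : m*y % h < h := Int.emod_lt_of_pos _ hh
      have hexp : (m-1)*y + h = m*y - y + h := by ring
      rw [hexp] at hhi
      have hyh : y < h := by linarith
      have hq1 : m*y/h < x := by
        by_contra hc
        push_neg at hc
        have h2 : h*x ≤ h*(m*y/h) := mul_le_mul_of_nonneg_left hc (le_of_lt hh)
        linarith
      have hq2 : x < m*y/h + 2 := by
        by_contra hc
        push_neg at hc
        have h2 : h*(m*y/h + 2) ≤ h*x := mul_le_mul_of_nonneg_left hc (le_of_lt hh)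
        have h3 : h*(m*y/h + 2) = h*(m*y/h) + 2*h := by ring
        linarith
      have hx : x = m*y/h + 1 := by omega
      subst hx
      refine ⟨y, ⟨⟨hy, hyh⟩, ?_⟩, rfl, rfl⟩
      have h3 : h*(m*y/h + 1) = h*(m*y/h) + h := by ring
      linarith
    · rintro ⟨y', ⟨⟨hy0, hyh⟩, hPy⟩, hx, hyy⟩
      subst hyy
      subst hx
      have hdm := Int.mul_ediv_add_emod (m*y') h
      have hrh : m*y' % h < h := Int.emod_lt_of_pos _ hh
      have h3 : h*(m*y'/h + 1) = h*(m*y'/h) + h := by ring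
      have hexp : (m-1)*y' + h = m*y' - y' + h := by ring
      refine ⟨hy0, by linarith, by rw [hexp]; linarith⟩
  have hcard : F.card = 2 := by
    rw [hSF, Set.ncard_coe_finset] at hcount
    exact hcount
  have hinj : Function.Injective (fun y : ℤ => (m*y/h + 1, y)) := by
    intro y y' hyy
    exact congrArg Prod.snd hyy
  have hcard2 : ((Finset.Ioo 0 h).filter (fun y => y < m*y % h)).card = 2 := by
    rw [hF] at hcard
    rwa [Finset.card_image_of_injective _ hinj] at hcard
  have hbij : ((Finset.Ioo 0 h).filter (fun y => y < m*y % h)).card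
      = ((Finset.Ioo 0 h).filter (fun y => ¬ (y < m*y % h))).card := by
    apply Finset.card_bij (fun y _ => h - y)
    · intro y hy
      rw [Finset.mem_filter, Finset.mem_Ioo] at hy ⊢
      obtain ⟨⟨hy0, hyh⟩, hPy⟩ := hy
      refine ⟨⟨by omega, by omega⟩, ?_⟩
      rw [emod_complement hh hm hy0 hyh]
      omega
    · intro y hy y' hy' h
      omega
    · intro b hb
      rw [Finset.mem_filter, Finset.mem_Ioo] at hb
      obtain ⟨⟨hb0, hbh⟩, hPb⟩ := hb
      push_neg at hPb
      have hne := emod_ne_self hh hm1 hb0 hbh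
      refine ⟨h - b, ?_, by omega⟩
      rw [Finset.mem_filter, Finset.mem_Ioo]
      refine ⟨⟨by omega, by omega⟩, ?_⟩
      rw [emod_complement hh hm hb0 hbh]
      omega
  have htot := Finset.card_filter_add_card_filter_not
    (s := Finset.Ioo 0 h) (p := fun y => y < m*y % h)
  have hIoo : (Finset.Ioo 0 h).card = (h - 1).toNat := by
    rw [Int.card_Ioo]; congr 1; ring
  rw [hcard2, ← hbij, hcard2, hIoo] at htot
  omega
-- ===== section 7 : forward direction =====

def intEf (P Q p : ℤ×ℤ) : ℤ := (Q.1-P.1)*(p.2-P.2)-(Q.2-P.2)*(p.1-P.1)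

lemma ef_toR' (P Q p : ℤ×ℤ) :
    ef (toR P) (toR Q) (toR p) = ((intEf P Q p : ℤ) : ℝ) := ef_toR P Q p

lemma intEf_pos_iff (P Q p : ℤ×ℤ) :
    (0:ℝ) < ef (toR P) (toR Q) (toR p) ↔ 0 < intEf P Q p := by
  rw [ef_toR']; exact Int.cast_pos

lemma intEf_nonneg_iff (P Q p : ℤ×ℤ) :
    (0:ℝ) ≤ ef (toR P) (toR Q) (toR p) ↔ 0 ≤ intEf P Q p := by
  rw [ef_toR']; norm_cast

lemma intEf_eq_zero_iff (P Q p : ℤ×ℤ) :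
    ef (toR P) (toR Q) (toR p) = 0 ↔ intEf P Q p = 0 := by
  rw [ef_toR']; exact Int.cast_eq_zero

lemma toR_inj : Function.Injective toR := by
  intro p q h
  simp only [toR, Prod.mk.injEq] at h
  exact Prod.ext (by exact_mod_cast h.1) (by exact_mod_cast h.2)

lemma canonical_step (gz m hei : ℤ) (hgpos : 0 < gz) (heipos : 0 < hei)
    (hQ1 : IsLatticePolygonPrimitiveEdges {((0:ℤ),(0:ℤ)),(gz,0),(m,hei)} 3 2) :
    LatticeEquiv ({((0:ℤ),(0:ℤ)),(gz,0),(m,hei)} : Finset (ℤ×ℤ)) T0 := by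
  obtain ⟨hcard, hext, hfront, hint⟩ := hQ1
  have hD1 : 0 < intEf (0,0) (gz,0) (m,hei) := by
    simp only [intEf]; nlinarith
  have hDr : 0 < ef (toR (0,0)) (toR (gz,0)) (toR (m,hei)) := (intEf_pos_iff _ _ _).mpr hD1
  have hhull : hullR {((0:ℤ),(0:ℤ)),(gz,0),(m,hei)}
      = convexHull ℝ {toR (0,0), toR (gz,0), toR (m,hei)} := hullR_triple _ _ _
  have hfrontier_mem : ∀ q : ℤ×ℤ, 0 ≤ intEf (0,0) (gz,0) q → 0 ≤ intEf (gz,0) (m,hei) q →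
      0 ≤ intEf (m,hei) (0,0) q →
      (intEf (0,0) (gz,0) q = 0 ∨ intEf (gz,0) (m,hei) q = 0 ∨ intEf (m,hei) (0,0) q = 0) →
      q ∈ ({((0:ℤ),(0:ℤ)),(gz,0),(m,hei)} : Finset (ℤ×ℤ)) := by
    intro q h1 h2 h3 hz
    apply hfront
    rw [hhull, frontier_tri hDr]
    refine ⟨⟨(intEf_nonneg_iff _ _ _).mpr h1, (intEf_nonneg_iff _ _ _).mpr h2,
      (intEf_nonneg_iff _ _ _).mpr h3⟩, ?_⟩
    rcases hz with hz | hz | hz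
    · exact Or.inl ((intEf_eq_zero_iff _ _ _).mpr hz)
    · exact Or.inr (Or.inl ((intEf_eq_zero_iff _ _ _).mpr hz))
    · exact Or.inr (Or.inr ((intEf_eq_zero_iff _ _ _).mpr hz))
  -- step 1 : gz = 1
  have hgz1 : gz = 1 := by
    by_contra hne
    have hge2 : 2 ≤ gz := by omega
    have e1 : intEf (0,0) (gz,0) (1,0) = 0 := by simp [intEf]
    have e2 : 0 ≤ intEf (gz,0) (m,hei) (1,0) := by simp only [intEf]; nlinarith
    have e3 : 0 ≤ intEf (m,hei) (0,0) (1,0) := by simp only [intEf]; nlinarith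
    have hmem := hfrontier_mem (1,0) (le_of_eq e1.symm) e2 e3 (Or.inl e1)
    simp only [Finset.mem_insert, Finset.mem_singleton, Prod.mk.injEq] at hmem
    omega
  subst hgz1
  -- step 2 : coprimality of m and hei
  have hcop : Int.gcd m hei = 1 := by
    by_contra hne
    have hGpos : 0 < (Int.gcd m hei : ℤ) := by
      exact_mod_cast Int.gcd_pos_iff.mpr (Or.inr (ne_of_gt heipos))
    have hge2 : 2 ≤ (Int.gcd m hei : ℤ) := by
      have : (Int.gcd m hei : ℤ) ≠ 1 := by exact_mod_cast hne
      omega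
    have hd1 : ((Int.gcd m hei : ℤ)) ∣ m := Int.gcd_dvd_left _ _
    have hd2 : ((Int.gcd m hei : ℤ)) ∣ hei := Int.gcd_dvd_right _ _
    obtain ⟨m'', hm''⟩ := hd1
    obtain ⟨h'', hh''⟩ := hd2
    have hh''pos : 0 < h'' := by nlinarith
    have hh''lt : h'' < hei := by nlinarith
    have e1 : 0 ≤ intEf (0,0) (1,0) (m'',h'') := by simp only [intEf]; nlinarith
    have e2 : 0 ≤ intEf (1,0) (m,hei) (m'',h'') := by
      simp only [intEf]
      have key : (m-1)*(h''-0) - (hei-0)*(m''-1) = hei - h'' := by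
        have h1 : m*h'' = hei*m'' := by linear_combination h'' * hm'' - m'' * hh''
        linarith [h1]
      rw [key]; omega
    have e3 : intEf (m,hei) (0,0) (m'',h'') = 0 := by
      simp only [intEf]
      have h1 : m*h'' = hei*m'' := by linear_combination h'' * hm'' - m'' * hh''
      linarith [h1]
    have hmem := hfrontier_mem (m'',h'') e1 e2 (le_of_eq e3.symm) (Or.inr (Or.inr e3))
    simp only [Finset.mem_insert, Finset.mem_singleton, Prod.mk.injEq] at hmem
    omega
  have hcop1 : Int.gcd (m-1) hei = 1 := by
    by_contra hne
    have hGpos : 0 < (Int.gcd (m-1) hei : ℤ) := by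
      exact_mod_cast Int.gcd_pos_iff.mpr (Or.inr (ne_of_gt heipos))
    have hge2 : 2 ≤ (Int.gcd (m-1) hei : ℤ) := by
      have : (Int.gcd (m-1) hei : ℤ) ≠ 1 := by exact_mod_cast hne
      omega
    have hd1 : ((Int.gcd (m-1) hei : ℤ)) ∣ (m-1) := Int.gcd_dvd_left _ _
    have hd2 : ((Int.gcd (m-1) hei : ℤ)) ∣ hei := Int.gcd_dvd_right _ _
    obtain ⟨m'', hm''⟩ := hd1
    obtain ⟨h'', hh''⟩ := hd2
    have hh''pos : 0 < h'' := by nlinarith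
    have hh''lt : h'' < hei := by nlinarith
    have hkey : (m-1)*h'' = hei*m'' := by linear_combination h'' * hm'' - m'' * hh''
    have e1 : 0 ≤ intEf (0,0) (1,0) (1+m'',h'') := by simp only [intEf]; nlinarith
    have e2 : intEf (1,0) (m,hei) (1+m'',h'') = 0 := by
      simp only [intEf]; linarith [hkey]
    have e3 : 0 ≤ intEf (m,hei) (0,0) (1+m'',h'') := by
      simp only [intEf]; nlinarith [hkey]
    have hmem := hfrontier_mem (1+m'',h'') e1 (le_of_eq e2.symm) e3 (Or.inr (Or.inl e2))
    simp only [Finset.mem_insert, Finset.mem_singleton, Prod.mk.injEq] at hmem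
    omega
  -- step 3 : hei = 5 via counting
  have hsetint : {q : ℤ×ℤ | toR q ∈ interior (hullR {((0:ℤ),(0:ℤ)),(1,0),(m,hei)})}
      = {q : ℤ×ℤ | 0 < q.2 ∧ m*q.2 < hei*q.1 ∧ hei*q.1 < (m-1)*q.2 + hei} := by
    ext ⟨x,y⟩
    simp only [Set.mem_setOf_eq, hhull, interior_tri hDr, intEf_pos_iff, intEf]
    constructor
    · rintro ⟨h1,h2,h3⟩
      refine ⟨by nlinarith, by nlinarith, by nlinarith⟩
    · rintro ⟨h1,h2,h3⟩
      refine ⟨by nlinarith, by nlinarith, by nlinarith⟩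
  rw [hsetint] at hint
  have hei5 : hei = 5 := counting_lemma heipos
    (Int.isCoprime_iff_gcd_eq_one.mpr hcop) (Int.isCoprime_iff_gcd_eq_one.mpr hcop1) hint
  subst hei5
  -- step 4 : shear to k = m % 5
  have hT2uni : IsUnimodularAffine (fun p : ℤ×ℤ => (1*p.1 + (-(m/5))*p.2 + 0, 0*p.1 + 1*p.2 + 0)) :=
    ⟨1, -(m/5), 0, 1, 0, 0, Or.inl (by ring), fun p => rfl⟩
  have himg2 : Finset.image (fun p : ℤ×ℤ => (1*p.1 + (-(m/5))*p.2 + 0, 0*p.1 + 1*p.2 + 0))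
      {((0:ℤ),(0:ℤ)),(1,0),(m,5)} = {((0:ℤ),(0:ℤ)),(1,0),(m % 5,5)} := by
    rw [Finset.image_insert, Finset.image_insert, Finset.image_singleton]
    rw [show ((m % 5, (5:ℤ)) : ℤ×ℤ) = (1*m + -(m/5)*5 + 0, 0*m + 1*5 + 0) from by
      apply Prod.ext <;> simp <;> omega]
    norm_num
  -- k is 2, 3 or 4
  have hk0 : 0 ≤ m % 5 := Int.emod_nonneg m (by norm_num)
  have hk5 : m % 5 < 5 := Int.emod_lt_of_pos m (by norm_num)
  have hkne0 : m % 5 ≠ 0 := by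
    intro h0
    have hdvd : (5:ℤ) ∣ m := Int.dvd_of_emod_eq_zero h0
    have : (5:ℤ) ∣ (Int.gcd m 5 : ℤ) := Int.dvd_coe_gcd hdvd (dvd_refl _)
    rw [hcop] at this
    norm_num at this
  have hkne1 : m % 5 ≠ 1 := by
    intro h0
    have h1 : (m-1) % 5 = 0 := by omega
    have hdvd : (5:ℤ) ∣ (m-1) := Int.dvd_of_emod_eq_zero h1
    have : (5:ℤ) ∣ (Int.gcd (m-1) 5 : ℤ) := Int.dvd_coe_gcd hdvd (dvd_refl _)
    rw [hcop1] at this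
    norm_num at this
  have hequiv2 : LatticeEquiv ({((0:ℤ),(0:ℤ)),(1,0),(m,5)} : Finset (ℤ×ℤ))
      {((0:ℤ),(0:ℤ)),(1,0),(m % 5,5)} := ⟨_, hT2uni, himg2⟩
  apply latticeEquiv_trans hequiv2
  have hk : m % 5 = 2 ∨ m % 5 = 3 ∨ m % 5 = 4 := by omega
  rcases hk with hk | hk | hk <;> rw [hk]
  · -- k = 2 : M = [[1,0],[3,-1]]
    refine ⟨fun p : ℤ×ℤ => (1*p.1 + 0*p.2 + 0, 3*p.1 + (-1)*p.2 + 0),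
      ⟨1, 0, 3, -1, 0, 0, Or.inr (by ring), fun p => rfl⟩, ?_⟩
    rw [Finset.image_insert, Finset.image_insert, Finset.image_singleton]
    norm_num
    decide
  · -- k = 3 : M = [[2,-1],[1,0]]
    refine ⟨fun p : ℤ×ℤ => (2*p.1 + (-1)*p.2 + 0, 1*p.1 + 0*p.2 + 0),
      ⟨2, -1, 1, 0, 0, 0, Or.inl (by ring), fun p => rfl⟩, ?_⟩
    rw [Finset.image_insert, Finset.image_insert, Finset.image_singleton]
    norm_num
    decide
  · -- k = 4 : M = [[-1,1],[-3,2]], t = (1,3)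
    refine ⟨fun p : ℤ×ℤ => ((-1)*p.1 + 1*p.2 + 1, (-3)*p.1 + 2*p.2 + 3),
      ⟨-1, 1, -3, 2, 1, 3, Or.inl (by ring), fun p => rfl⟩, ?_⟩
    rw [Finset.image_insert, Finset.image_insert, Finset.image_singleton]
    norm_num
    decide
lemma main_pos' (A B C : ℤ×ℤ) (hpos : 0 < intEf A B C)
    (hQ : IsLatticePolygonPrimitiveEdges {A,B,C} 3 2) :
    LatticeEquiv ({A,B,C} : Finset (ℤ×ℤ)) T0 := by
  -- Bezout construction for u = B - A
  have hBez := Int.gcd_eq_gcd_ab (B.1 - A.1) (B.2 - A.2)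
  set α := Int.gcdA (B.1 - A.1) (B.2 - A.2) with hα
  set β := Int.gcdB (B.1 - A.1) (B.2 - A.2) with hβ
  set gz : ℤ := (Int.gcd (B.1 - A.1) (B.2 - A.2) : ℤ) with hgz
  have hune : B.1 - A.1 ≠ 0 ∨ B.2 - A.2 ≠ 0 := by
    by_contra hc
    push_neg at hc
    have : intEf A B C = 0 := by
      simp only [intEf]; rw [hc.1, hc.2]; ring
    omega
  have hgpos : 0 < gz := by
    rw [hgz]
    exact_mod_cast Nat.pos_of_ne_zero (fun h0 => by
      rcases Int.gcd_eq_zero_iff.mp h0 with ⟨h1, h2⟩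
      rcases hune with h | h <;> omega)
  have hd1 : gz ∣ (B.1 - A.1) := by rw [hgz]; exact Int.gcd_dvd_left _ _
  have hd2 : gz ∣ (B.2 - A.2) := by rw [hgz]; exact Int.gcd_dvd_right _ _
  obtain ⟨u1', hu1'⟩ := hd1
  obtain ⟨u2', hu2'⟩ := hd2
  have hdet1 : α * u1' + β * u2' = 1 := by
    have h1 : gz * (α * u1' + β * u2') = gz * 1 := by
      have : gz = (B.1 - A.1) * α + (B.2 - A.2) * β := hBez
      rw [hu1', hu2'] at this
      linear_combination -this
    exact mul_left_cancel₀ (ne_of_gt hgpos) h1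
  set m := α*(C.1 - A.1) + β*(C.2 - A.2) with hm
  set hei := (-u2')*(C.1 - A.1) + u1'*(C.2 - A.2) with hhei
  have hDfact : gz * hei = intEf A B C := by
    simp only [intEf, hhei]
    linear_combination (C.1 - A.1) * hu2' - (C.2 - A.2) * hu1'
  have heipos : 0 < hei := by nlinarith
  set T : ℤ×ℤ → ℤ×ℤ := fun p =>
    (α*p.1 + β*p.2 + (-(α*A.1 + β*A.2)), (-u2')*p.1 + u1'*p.2 + (u2'*A.1 - u1'*A.2)) with hT
  have hTuni : IsUnimodularAffine T :=
    ⟨α, β, -u2', u1', -(α*A.1 + β*A.2), u2'*A.1 - u1'*A.2,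
      Or.inl (by linear_combination hdet1), fun p => rfl⟩
  have hTA : T A = ((0:ℤ),(0:ℤ)) := by
    rw [hT]; simp only [Prod.mk.injEq]; constructor <;> ring
  have hTB : T B = (gz,(0:ℤ)) := by
    rw [hT]; simp only [Prod.mk.injEq]
    constructor
    · have : gz = (B.1 - A.1) * α + (B.2 - A.2) * β := hBez
      linear_combination -this
    · linear_combination (-u2') * hu1' + u1' * hu2'
  have hTC : T C = (m, hei) := by
    rw [hT]; simp only [Prod.mk.injEq]
    constructor
    · rw [hm]; ring
    · rw [hhei]; ring
  have himg : Finset.image T {A,B,C} = {((0:ℤ),(0:ℤ)), (gz,0), (m,hei)} := by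
    rw [Finset.image_insert, Finset.image_insert, Finset.image_singleton, hTA, hTB, hTC]
  have hQ1 : IsLatticePolygonPrimitiveEdges {((0:ℤ),(0:ℤ)), (gz,0), (m,hei)} 3 2 := by
    have := invariance hTuni hQ
    rwa [himg] at this
  exact latticeEquiv_trans ⟨T, hTuni, himg⟩ (canonical_step gz m hei hgpos heipos hQ1)

lemma forward_dir (Q : Finset (ℤ×ℤ)) (hQ : IsLatticePolygonPrimitiveEdges Q 3 2) :
    LatticeEquiv Q T0 := by
  obtain ⟨A, B, C, hAB, hAC, hBC, rfl⟩ := Finset.card_eq_three.mp hQ.1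
  -- nondegeneracy
  have hD0 : intEf A B C ≠ 0 := by
    intro h0
    have hABr : toR A ≠ toR B := fun h => hAB (toR_inj h)
    have hsub : hullR {A,B,C} ⊆
        {p : ℝ×ℝ | 0 ≤ ef (toR A) (toR B) p} ∩ {p | 0 ≤ ef (toR B) (toR A) p} := by
      rw [hullR_triple]
      apply convexHull_min
      · intro x hx
        have hvals : ∀ z : ℤ×ℤ, intEf A B z = 0 → x = toR z →
            x ∈ {p : ℝ×ℝ | 0 ≤ ef (toR A) (toR B) p} ∩ {p | 0 ≤ ef (toR B) (toR A) p} := by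
          intro z hz hxz
          subst hxz
          constructor
          · exact (intEf_nonneg_iff _ _ _).mpr (le_of_eq hz.symm)
          · apply (intEf_nonneg_iff _ _ _).mpr
            have : intEf B A z = - intEf A B z := by simp only [intEf]; ring
            omega
        simp only [Set.mem_insert_iff, Set.mem_singleton_iff] at hx
        rcases hx with rfl | rfl | rfl
        · exact hvals A (by simp [intEf]) rfl
        · exact hvals B (by simp [intEf]; ring) rfl
        · exact hvals C h0 rfl
      · exact (convex_ef (toR A) (toR B)).inter (convex_ef (toR B) (toR A))
    have hintsub : interior (hullR {A,B,C}) = ∅ := by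
      apply Set.eq_empty_of_subset_empty
      have h1 := interior_mono hsub
      rw [interior_inter, interior_ef _ _ hABr, interior_ef _ _ (Ne.symm hABr)] at h1
      intro x hx
      obtain ⟨hx1, hx2⟩ := h1 hx
      simp only [Set.mem_setOf_eq] at hx1 hx2
      have : ef (toR B) (toR A) x = - ef (toR A) (toR B) x := by
        simp only [ef_def]; ring
      rw [this] at hx2
      linarith
    have := hQ.2.2.2
    rw [hintsub] at this
    simp only [Set.mem_empty_iff_false, Set.setOf_false, Set.ncard_empty] at this
    omega
  rcases lt_or_gt_of_ne hD0 with hneg | hpos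
  · -- swap B and C
    have hset : ({A,B,C} : Finset (ℤ×ℤ)) = {A,C,B} := by
      ext q; simp only [Finset.mem_insert, Finset.mem_singleton]; tauto
    have hpos' : 0 < intEf A C B := by
      have : intEf A C B = - intEf A B C := by simp only [intEf]; ring
      omega
    rw [hset] at hQ ⊢
    exact main_pos' A C B hpos' hQ
  · exact main_pos' A B C hpos hQ

theorem classification_triangles_two_interior_points' (Q : Finset (ℤ × ℤ)) :
    IsLatticePolygonPrimitiveEdges Q 3 2 ↔ LatticeEquiv Q T0 := by
  constructor
  · exact forward_dir Q
  · intro h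
    obtain ⟨S, hS, himg⟩ := latticeEquiv_symm h
    have := invariance hS T0_property
    rwa [himg] at this

/-- up to Aff(ℤ²), there is exactly one lattice triangle with exactly two
interior integral points and all edges of lattice length 1, namely T0. -/
theorem classification_triangles_two_interior_points (Q : Finset (ℤ × ℤ)) :
    IsLatticePolygonPrimitiveEdges Q 3 2 ↔ LatticeEquiv Q T0 := by
  exact classification_triangles_two_interior_points' Q
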